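/- Let M, N be positive natural numbers and let d be a dataset of N instances with M binary protected attributes, where each instance carries both a true binary label and a predicted binary label. For a hypercube x, define the true positive rate TPR(x) = (number of instances in x with true label true and predicted label true)/(number of instances in x with true label true). Suppose every vertex (level-0 hypercube) contains at least one instance whose true label is true. Then the minimum of TPR over level-K hypercubes is monotonically increasing in K and the maximum of TPR over level-K hypercubes is monotonically decreasing in K: for every K with 1 ≤ K ≤ M, min over level K-1 of TPR ≤ min over level K of TPR, and max over level K of TPR ≤ max over level K-1 of TPR. -/

import Mathlib

/-- An attribute vector `v` belongs to the hypercube `x` if it matches all specified coordinates. -/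
def Belongs {M : ℕ} (x : Fin M → Option Bool) (v : Fin M → Bool) : Prop :=
  ∀ i : Fin M, ∀ b : Bool, x i = some b → v i = b

instance {M : ℕ} (x : Fin M → Option Bool) (v : Fin M → Bool) : Decidable (Belongs x v) := by
  unfold Belongs; infer_instance

/-- The level of a hypercube: the number of its stars (unspecified coordinates). -/
def level {M : ℕ} (x : Fin M → Option Bool) : ℕ :=
  (Finset.univ.filter fun i => x i = none).card

/-- The finset of all hypercubes of level `K`. -/
def levelSet (M K : ℕ) : Finset (Fin M → Option Bool) :=
  Finset.univ.filter fun x => level x = K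

/-- N(x): the number of instances of the dataset `d` (with true and predicted labels)
whose attribute vector belongs to `x`. -/
def cnt {M N : ℕ} (d : Fin N → (Fin M → Bool) × Bool × Bool) (x : Fin M → Option Bool) : ℕ :=
  (Finset.univ.filter fun n => Belongs x (d n).1).card

/-- The number of instances in `x` with true label `true`. -/
def cntT {M N : ℕ} (d : Fin N → (Fin M → Bool) × Bool × Bool) (x : Fin M → Option Bool) : ℕ :=
  (Finset.univ.filter fun n => Belongs x (d n).1 ∧ (d n).2.1 = true).card

/-- The number of true positives in `x` (true label and predicted label both true). -/
def cntTP {M N : ℕ} (d : Fin N → (Fin M → Bool) × Bool × Bool) (x : Fin M → Option Bool) : ℕ :=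
  (Finset.univ.filter fun n =>
    Belongs x (d n).1 ∧ (d n).2.1 = true ∧ (d n).2.2 = true).card

/-- The true positive rate of hypercube `x`. -/
def TPR {M N : ℕ} (d : Fin N → (Fin M → Bool) × Bool × Bool) (x : Fin M → Option Bool) : ℚ :=
  (cntTP d x : ℚ) / (cntT d x : ℚ)

/-- Minimum true positive rate over all hypercubes of level `K`
(the level set is nonempty whenever `K ≤ M`, so the junk value `0` is never used there). -/
def TPRMin {M N : ℕ} (d : Fin N → (Fin M → Bool) × Bool × Bool) (K : ℕ) : ℚ :=
  (((levelSet M K).image (TPR d)).min).untopD 0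

/-- Maximum true positive rate over all hypercubes of level `K`. -/
def TPRMax {M N : ℕ} (d : Fin N → (Fin M → Bool) × Bool × Bool) (K : ℕ) : ℚ :=
  (((levelSet M K).image (TPR d)).max).unbotD 0

lemma belongs_update {M : ℕ} (x : Fin M → Option Bool) (i : Fin M) (b : Bool)
    (hx : x i = none) (v : Fin M → Bool) :
    Belongs (Function.update x i (some b)) v ↔ Belongs x v ∧ v i = b := by
  constructor
  · intro h
    refine ⟨fun j c hj => ?_, h i b (by simp)⟩
    by_cases hji : j = i
    · subst hji; rw [hx] at hj; cases hj
    · exact h j c (by simp [Function.update_of_ne hji, hj])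
  · rintro ⟨h1, h2⟩ j c hj
    by_cases hji : j = i
    · subst hji; simp at hj; subst hj; exact h2
    · exact h1 j c (by simpa [Function.update_of_ne hji] using hj)

lemma level_update_some {M : ℕ} (x : Fin M → Option Bool) (i : Fin M) (b : Bool)
    (hx : x i = none) : level (Function.update x i (some b)) = level x - 1 := by
  unfold level
  have h : (Finset.univ.filter fun j => Function.update x i (some b) j = none)
      = (Finset.univ.filter fun j => x j = none).erase i := by
    ext j
    simp only [Finset.mem_filter, Finset.mem_univ, true_and, Finset.mem_erase,
      Function.update_apply]
    by_cases hji : j = i <;> simp [hji]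
  rw [h, Finset.card_erase_of_mem (by simp [hx])]

lemma levelSet_nonempty (M K : ℕ) (h : K ≤ M) : (levelSet M K).Nonempty := by
  induction K with
  | zero => exact ⟨fun _ => some true, by simp [levelSet, level]⟩
  | succ k ih =>
    obtain ⟨x, hx⟩ := ih (Nat.le_of_succ_le h)
    simp only [levelSet, Finset.mem_filter, Finset.mem_univ, true_and] at hx
    simp only [level] at hx
    have hcard : (Finset.univ.filter fun j => x j = none).card < M := by
      rw [hx]; exact Nat.lt_of_succ_le h
    have hex : ∃ i, x i ≠ none := by
      by_contra hc; push_neg at hc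
      have : (Finset.univ.filter fun j => x j = none) = Finset.univ := by
        ext j; simp [hc j]
      rw [this] at hcard; simp at hcard
    obtain ⟨i, hi⟩ := hex
    refine ⟨Function.update x i none, ?_⟩
    simp only [levelSet, Finset.mem_filter, Finset.mem_univ, true_and]
    simp only [level]
    have h2 : (Finset.univ.filter fun j => Function.update x i none j = none)
        = insert i (Finset.univ.filter fun j => x j = none) := by
      ext j
      simp only [Finset.mem_filter, Finset.mem_univ, true_and, Finset.mem_insert,
        Function.update_apply]
      by_cases hji : j = i <;> simp [hji]
    rw [h2, Finset.card_insert_of_notMem (by simp [hi]), hx]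

lemma card_split {N : ℕ} (p : Fin N → Prop) [DecidablePred p] (q : Fin N → Bool) :
    (Finset.univ.filter p).card
      = (Finset.univ.filter fun n => p n ∧ q n = true).card
      + (Finset.univ.filter fun n => p n ∧ q n = false).card := by
  rw [← Finset.filter_filter, ← Finset.filter_filter]
  have := Finset.card_filter_add_card_filter_not
    (s := Finset.univ.filter p) (p := fun n => q n = true)
  simp only [Bool.not_eq_true] at this
  exact this.symm

lemma cntT_split {M N : ℕ} (d : Fin N → (Fin M → Bool) × Bool × Bool)
    (x : Fin M → Option Bool) (i : Fin M) (hx : x i = none) :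
    cntT d x = cntT d (Function.update x i (some true)) + cntT d (Function.update x i (some false)) := by
  unfold cntT
  have e : ∀ b : Bool,
      (Finset.univ.filter fun n => Belongs (Function.update x i (some b)) (d n).1 ∧ (d n).2.1 = true)
      = Finset.univ.filter fun n => (Belongs x (d n).1 ∧ (d n).2.1 = true) ∧ (d n).1 i = b := by
    intro b
    apply Finset.filter_congr; intro n _
    rw [belongs_update x i b hx]; tauto
  rw [e true, e false]
  exact card_split _ _

lemma cntTP_split {M N : ℕ} (d : Fin N → (Fin M → Bool) × Bool × Bool)
    (x : Fin M → Option Bool) (i : Fin M) (hx : x i = none) :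
    cntTP d x = cntTP d (Function.update x i (some true)) + cntTP d (Function.update x i (some false)) := by
  unfold cntTP
  have e : ∀ b : Bool,
      (Finset.univ.filter fun n => Belongs (Function.update x i (some b)) (d n).1 ∧ (d n).2.1 = true ∧ (d n).2.2 = true)
      = Finset.univ.filter fun n => (Belongs x (d n).1 ∧ (d n).2.1 = true ∧ (d n).2.2 = true) ∧ (d n).1 i = b := by
    intro b
    apply Finset.filter_congr; intro n _
    rw [belongs_update x i b hx]; tauto
  rw [e true, e false]
  exact card_split _ _

lemma cntT_pos {M N : ℕ} (d : Fin N → (Fin M → Bool) × Bool × Bool)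
    (hvert : ∀ v : Fin M → Bool, 0 < cntT d (fun i => some (v i)))
    (x : Fin M → Option Bool) : 0 < cntT d x := by
  refine lt_of_lt_of_le (hvert (fun i => (x i).getD true)) ?_
  unfold cntT
  apply Finset.card_le_card
  intro n hn
  simp only [Finset.mem_filter, Finset.mem_univ, true_and] at hn ⊢
  obtain ⟨hB, hT⟩ := hn
  refine ⟨fun i b hib => ?_, hT⟩
  have := hB i ((x i).getD true) rfl
  rw [this, hib]
  rfl

lemma mediant_min_max (a1 a2 b1 b2 : ℚ) (h1 : 0 < b1) (h2 : 0 < b2) :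
    min (a1/b1) (a2/b2) ≤ (a1+a2)/(b1+b2) ∧ (a1+a2)/(b1+b2) ≤ max (a1/b1) (a2/b2) := by
  have key : ∀ c1 c2 e1 e2 : ℚ, 0 < e1 → 0 < e2 → c1/e1 ≤ c2/e2 →
      c1/e1 ≤ (c1+c2)/(e1+e2) ∧ (c1+c2)/(e1+e2) ≤ c2/e2 := by
    intro c1 c2 e1 e2 he1 he2 h
    have h' := (div_le_div_iff₀ he1 he2).mp h
    constructor
    · rw [div_le_div_iff₀ he1 (by linarith)]; nlinarith
    · rw [div_le_div_iff₀ (by linarith) he2]; nlinarith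
  rcases le_total (a1/b1) (a2/b2) with h | h
  · rw [min_eq_left h, max_eq_right h]
    exact key a1 a2 b1 b2 h1 h2 h
  · rw [min_eq_right h, max_eq_left h, add_comm a1 a2, add_comm b1 b2]
    exact key a2 a1 b2 b1 h2 h1 h

lemma TPR_between {M N : ℕ} (d : Fin N → (Fin M → Bool) × Bool × Bool)
    (hvert : ∀ v : Fin M → Bool, 0 < cntT d (fun i => some (v i)))
    (x : Fin M → Option Bool) (i : Fin M) (hx : x i = none) :
    min (TPR d (Function.update x i (some true))) (TPR d (Function.update x i (some false))) ≤ TPR d x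
    ∧ TPR d x ≤ max (TPR d (Function.update x i (some true))) (TPR d (Function.update x i (some false))) := by
  have h1 : (0:ℚ) < (cntT d (Function.update x i (some true)) : ℚ) := by
    exact_mod_cast cntT_pos d hvert _
  have h2 : (0:ℚ) < (cntT d (Function.update x i (some false)) : ℚ) := by
    exact_mod_cast cntT_pos d hvert _
  have hT := cntT_split d x i hx
  have hTP := cntTP_split d x i hx
  have := mediant_min_max (cntTP d (Function.update x i (some true)))
    (cntTP d (Function.update x i (some false)))
    (cntT d (Function.update x i (some true)))
    (cntT d (Function.update x i (some false))) h1 h2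
  unfold TPR
  rw [hT, hTP]
  push_cast
  exact this

theorem TPR_min_max_mono' (M N : ℕ) (hM : 0 < M) (hN : 0 < N)
    (d : Fin N → (Fin M → Bool) × Bool × Bool)
    (hvert : ∀ v : Fin M → Bool, 0 < cntT d (fun i => some (v i)))
    (K : ℕ) (hK1 : 1 ≤ K) (hKM : K ≤ M) :
    ((((levelSet M (K-1)).image (TPR d)).min).untopD 0) ≤ ((((levelSet M K).image (TPR d)).min).untopD 0)
    ∧ ((((levelSet M K).image (TPR d)).max).unbotD 0) ≤ ((((levelSet M (K-1)).image (TPR d)).max).unbotD 0) := by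
  have hKm1 : K - 1 ≤ M := le_trans (Nat.sub_le K 1) hKM
  have hne1 : ((levelSet M (K-1)).image (TPR d)).Nonempty :=
    (levelSet_nonempty M (K-1) hKm1).image _
  have hne2 : ((levelSet M K).image (TPR d)).Nonempty :=
    (levelSet_nonempty M K hKM).image _
  have minEq : ∀ (s : Finset ℚ) (h : s.Nonempty), (s.min).untopD 0 = s.min' h := by
    intro s h; rw [← Finset.coe_min' h]; simp
  have maxEq : ∀ (s : Finset ℚ) (h : s.Nonempty), (s.max).unbotD 0 = s.max' h := by
    intro s h; rw [← Finset.coe_max' h]; simp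
  rw [minEq _ hne1, minEq _ hne2, maxEq _ hne1, maxEq _ hne2]
  have children : ∀ x ∈ levelSet M K, ∃ t f, t ∈ levelSet M (K-1) ∧ f ∈ levelSet M (K-1) ∧
      min (TPR d t) (TPR d f) ≤ TPR d x ∧ TPR d x ≤ max (TPR d t) (TPR d f) := by
    intro x hx
    simp only [levelSet, Finset.mem_filter, Finset.mem_univ, true_and] at hx
    have hpos : 0 < (Finset.univ.filter fun j => x j = none).card := by
      rw [show (Finset.univ.filter fun j => x j = none).card = level x from rfl, hx]
      exact hK1
    obtain ⟨i, hi⟩ := Finset.card_pos.mp hpos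
    have hi' : x i = none := (Finset.mem_filter.mp hi).2
    refine ⟨Function.update x i (some true), Function.update x i (some false), ?_, ?_,
      TPR_between d hvert x i hi'⟩
    · simp only [levelSet, Finset.mem_filter, Finset.mem_univ, true_and]
      rw [level_update_some x i true hi', hx]
    · simp only [levelSet, Finset.mem_filter, Finset.mem_univ, true_and]
      rw [level_update_some x i false hi', hx]
  constructor
  · apply Finset.le_min'
    intro y hy
    obtain ⟨x, hx, rfl⟩ := Finset.mem_image.mp hy
    obtain ⟨t, f, ht, hf, hmin, -⟩ := children x hx
    refine le_trans (le_min ?_ ?_) hmin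
    · exact Finset.min'_le _ _ (Finset.mem_image_of_mem _ ht)
    · exact Finset.min'_le _ _ (Finset.mem_image_of_mem _ hf)
  · apply Finset.max'_le
    intro y hy
    obtain ⟨x, hx, rfl⟩ := Finset.mem_image.mp hy
    obtain ⟨t, f, ht, hf, -, hmax⟩ := children x hx
    refine le_trans hmax (max_le ?_ ?_)
    · exact Finset.le_max' _ _ (Finset.mem_image_of_mem _ ht)
    · exact Finset.le_max' _ _ (Finset.mem_image_of_mem _ hf)

/-- If every vertex contains at least one instance whose true label is true,
the minimum TPR per level is monotonically increasing and the maximum TPR per level is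
monotonically decreasing in the level. -/
theorem TPR_min_max_mono (M N : ℕ) (hM : 0 < M) (hN : 0 < N)
    (d : Fin N → (Fin M → Bool) × Bool × Bool)
    (hvert : ∀ v : Fin M → Bool, 0 < cntT d (fun i => some (v i)))
    (K : ℕ) (hK1 : 1 ≤ K) (hKM : K ≤ M) :
    TPRMin d (K - 1) ≤ TPRMin d K ∧ TPRMax d K ≤ TPRMax d (K - 1) := by
  unfold TPRMin TPRMax
  exact TPR_min_max_mono' M N hM hN d hvert K hK1 hKM
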